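/- Let μ be a Borel probability measure on ℝ^d that is absolutely continuous with respect to Lebesgue measure, with a density that is strictly positive Lebesgue-almost everywhere. Then there exists a measurable map f : [0,1]^d → ℝ^d such that the pushforward under f of the uniform probability measure on [0,1]^d equals μ, and f is injective on a set of full measure: there is a Borel set Ω₀ ⊆ [0,1]^d of uniform measure one such that f restricted to Ω₀ is injective. -/

import Mathlib

open MeasureTheory ProbabilityTheory Set Filter Function
open scoped ENNReal Topology

lemma KR.leftLim_cdf (ξ : Measure ℝ) [IsProbabilityMeasure ξ] [NullSingletonClass ξ] (x : ℝ) :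
    leftLim (cdf ξ) x = cdf ξ x := by
  have h := StieltjesFunction.measure_singleton (cdf ξ) x
  rw [measure_cdf, measure_singleton] at h
  have h1 : cdf ξ x - leftLim (cdf ξ) x ≤ 0 := by
    by_contra hc
    push_neg at hc
    rw [eq_comm, ENNReal.ofReal_eq_zero] at h
    linarith
  have h2 : leftLim (cdf ξ) x ≤ cdf ξ x := (monotone_cdf ξ).leftLim_le le_rfl
  linarith

lemma KR.measure_cdf_le (ξ : Measure ℝ) [IsProbabilityMeasure ξ] [NullSingletonClass ξ]
    {c : ℝ} (hc0 : 0 ≤ c) (hc1 : c ≤ 1) :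
    ξ {x | cdf ξ x ≤ c} = ENNReal.ofReal c := by
  set F := cdf ξ with hF
  set S := {x | F x ≤ c} with hS
  rcases S.eq_empty_or_nonempty with hE | hne
  · -- empty: c must be 0
    have hc : ¬ 0 < c := by
      intro hc
      obtain ⟨x, hx⟩ : ∃ x, F x < c := by
        have := (tendsto_cdf_atBot ξ).eventually (eventually_lt_nhds hc)
        exact this.exists
      have hxS : x ∈ S := hx.le
      rw [hE] at hxS
      exact hxS
    have : c = 0 := le_antisymm (not_lt.mp hc) hc0
    simp [hE, this]
  by_cases hbdd : BddAbove S
  · set b := sSup S with hb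
    have hIio : Iio b ⊆ S := by
      intro t ht
      obtain ⟨s, hsS, hts⟩ := exists_lt_of_lt_csSup hne ht
      exact le_trans ((monotone_cdf ξ) hts.le) hsS
    have hSIic : S ⊆ Iic b := fun s hs => le_csSup hbdd hs
    -- c ≤ F b by right continuity
    have hcFb : c ≤ F b := by
      have ht : Tendsto F (𝓝[>] b) (𝓝 (F b)) :=
        ((cdf ξ).right_continuous b).tendsto.mono_left (nhdsWithin_mono b Ioi_subset_Ici_self)
      refine ge_of_tendsto ht ?_
      filter_upwards [self_mem_nhdsWithin] with t ht'
      have htS : t ∉ S := fun h => not_lt.mpr (le_csSup hbdd h) ht'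
      exact (not_le.mp htS).le
    -- F b ≤ c by left limit
    have hFbc : F b ≤ c := by
      have hl : Tendsto F (𝓝[<] b) (𝓝 (leftLim F b)) := (monotone_cdf ξ).tendsto_leftLim b
      have : leftLim F b ≤ c := by
        refine le_of_tendsto hl ?_
        filter_upwards [self_mem_nhdsWithin] with t ht
        exact (hIio ht)
      rwa [KR.leftLim_cdf ξ b] at this
    have hFb : F b = c := le_antisymm hFbc hcFb
    have h1 : ξ S ≤ ENNReal.ofReal c := by
      calc ξ S ≤ ξ (Iic b) := measure_mono hSIic
        _ = ENNReal.ofReal (F b) := (ofReal_cdf ξ b).symm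
        _ = ENNReal.ofReal c := by rw [hFb]
    have h2 : ENNReal.ofReal c ≤ ξ S := by
      calc ENNReal.ofReal c = ENNReal.ofReal (F b) := by rw [hFb]
        _ = ξ (Iic b) := ofReal_cdf ξ b
        _ ≤ ξ (Iio b) + ξ {b} := by
            rw [← Iio_union_right]; exact measure_union_le _ _
        _ = ξ (Iio b) := by rw [measure_singleton, add_zero]
        _ ≤ ξ S := measure_mono hIio
    exact le_antisymm h1 h2
  · -- unbounded: S = univ, c = 1
    have hU : S = univ := by
      rw [not_bddAbove_iff] at hbdd
      ext x
      simp only [Set.mem_univ, iff_true]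
      obtain ⟨s, hsS, hxs⟩ := hbdd x
      exact le_trans ((monotone_cdf ξ) hxs.le) hsS
    have h1c : (1:ℝ) ≤ c := by
      refine le_of_tendsto (tendsto_cdf_atTop ξ) ?_
      filter_upwards with t
      have : t ∈ S := hU ▸ Set.mem_univ t
      exact this
    have : c = 1 := le_antisymm hc1 h1c
    rw [hU, this, measure_univ, ENNReal.ofReal_one]

section
variable (ξ : Measure ℝ) [IsProbabilityMeasure ξ] [NullSingletonClass ξ]
set_option linter.unusedSectionVars false

variable (ξ : Measure ℝ) [IsProbabilityMeasure ξ] [NullSingletonClass ξ]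

lemma KR.measurableSet_cdf_le (c : ℝ) : MeasurableSet {x | cdf ξ x ≤ c} :=
  (monotone_cdf ξ).measurable measurableSet_Iic

lemma KR.measure_cdf_eq (c : ℝ) : ξ {x | cdf ξ x = c} = 0 := by
  rcases lt_or_ge c 0 with hc | hc0
  · have : {x | cdf ξ x = c} = ∅ := by
      ext x; simp only [Set.mem_setOf_eq, Set.mem_empty_iff_false, iff_false]
      intro h; exact absurd (h ▸ cdf_nonneg ξ x) (not_le.mpr hc)
    simp [this]
  rcases lt_or_ge 1 c with hc1 | hc1
  · have : {x | cdf ξ x = c} = ∅ := by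
      ext x; simp only [Set.mem_setOf_eq, Set.mem_empty_iff_false, iff_false]
      intro h; exact absurd (h ▸ cdf_le_one ξ x) (not_le.mpr hc1)
    simp [this]
  -- 0 ≤ c ≤ 1
  set δ := ξ {x | cdf ξ x = c} with hδ
  have key : ∀ n : ℕ, δ + ENNReal.ofReal (c - 1/(n+1)) ≤ ENNReal.ofReal c := by
    intro n
    have hdisj : Disjoint {x | cdf ξ x = c} {x | cdf ξ x ≤ c - 1/(n+1)} := by
      rw [Set.disjoint_left]
      intro x hx hx'
      simp only [Set.mem_setOf_eq] at hx hx'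
      have hn : (0:ℝ) < 1/(n+1) := by positivity
      linarith
    have hle : ENNReal.ofReal (c - 1/(n+1)) ≤ ξ {x | cdf ξ x ≤ c - 1/(n+1)} := by
      rcases le_or_gt 0 (c - 1/(n+1)) with h | h
      · have hn : (0:ℝ) < 1/(n+1) := by positivity
        rw [KR.measure_cdf_le ξ h (by linarith)]
      · exact le_trans (le_of_eq (ENNReal.ofReal_eq_zero.mpr h.le)) (zero_le)
    calc δ + ENNReal.ofReal (c - 1/(n+1))
        ≤ δ + ξ {x | cdf ξ x ≤ c - 1/(n+1)} := by gcongr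
      _ = ξ ({x | cdf ξ x = c} ∪ {x | cdf ξ x ≤ c - 1/(n+1)}) :=
          (measure_union hdisj (KR.measurableSet_cdf_le ξ _)).symm
      _ ≤ ξ {x | cdf ξ x ≤ c} := by
          refine measure_mono ?_
          rintro x (hx | hx)
          · exact le_of_eq hx
          · have hn : (0:ℝ) < 1/(n+1) := by positivity
            simp only [Set.mem_setOf_eq] at hx ⊢; linarith
      _ = ENNReal.ofReal c := KR.measure_cdf_le ξ hc0 hc1
  have hlim : Tendsto (fun n : ℕ => δ + ENNReal.ofReal (c - 1/(n+1))) atTop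
      (𝓝 (δ + ENNReal.ofReal c)) := by
    refine Tendsto.const_add δ ?_
    refine (ENNReal.continuous_ofReal.tendsto c).comp ?_
    have : Tendsto (fun n : ℕ => 1/((n:ℝ)+1)) atTop (𝓝 0) :=
      tendsto_one_div_add_atTop_nhds_zero_nat
    simpa using (tendsto_const_nhds (x := c)).sub this
  have hfin : δ + ENNReal.ofReal c ≤ ENNReal.ofReal c :=
    le_of_tendsto hlim (Filter.Eventually.of_forall key)
  have : δ + ENNReal.ofReal c ≤ 0 + ENNReal.ofReal c := by simpa using hfin
  have := ENNReal.add_le_add_iff_right (ENNReal.ofReal_ne_top) |>.mp this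
  simpa using this
end

open MeasureTheory ProbabilityTheory Set Filter Function
open scoped ENNReal Topology

noncomputable def KR.quantile (ν : Measure ℝ) (u : ℝ) : ℝ :=
  if u ∈ Set.Ioo (0:ℝ) 1 then sInf {t | u ≤ cdf ν t} else 0

section
variable (ν : Measure ℝ) [IsProbabilityMeasure ν]
set_option linter.unusedSectionVars false

lemma KR.q_nonempty {u : ℝ} (hu : u ∈ Set.Ioo (0:ℝ) 1) :
    {t | u ≤ cdf ν t}.Nonempty := by
  have := (tendsto_cdf_atTop ν).eventually (eventually_ge_nhds hu.2)
  exact this.exists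

lemma KR.q_bddBelow {u : ℝ} (hu : u ∈ Set.Ioo (0:ℝ) 1) :
    BddBelow {t | u ≤ cdf ν t} := by
  have h := (tendsto_cdf_atBot ν).eventually (eventually_lt_nhds hu.1)
  obtain ⟨B, hB⟩ := Filter.eventually_atBot.mp h
  refine ⟨B, fun s hs => ?_⟩
  by_contra hc
  push_neg at hc
  exact absurd hs (not_le.mpr (hB s hc.le))

lemma KR.le_cdf_quantile {u : ℝ} (hu : u ∈ Set.Ioo (0:ℝ) 1) :
    u ≤ cdf ν (KR.quantile ν u) := by
  rw [KR.quantile, if_pos hu]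
  set b := sInf {t | u ≤ cdf ν t} with hb
  have ht : Tendsto (cdf ν) (𝓝[>] b) (𝓝 (cdf ν b)) :=
    ((cdf ν).right_continuous b).tendsto.mono_left (nhdsWithin_mono b Ioi_subset_Ici_self)
  refine ge_of_tendsto ht ?_
  filter_upwards [self_mem_nhdsWithin] with t ht'
  obtain ⟨s, hs, hst⟩ := exists_lt_of_csInf_lt (KR.q_nonempty ν hu) ht'
  exact le_trans hs ((monotone_cdf ν) hst.le)

lemma KR.quantile_le_iff {u x : ℝ} (hu : u ∈ Set.Ioo (0:ℝ) 1) :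
    KR.quantile ν u ≤ x ↔ u ≤ cdf ν x := by
  constructor
  · intro h
    exact le_trans (KR.le_cdf_quantile ν hu) ((monotone_cdf ν) h)
  · intro h
    rw [KR.quantile, if_pos hu]
    exact csInf_le (KR.q_bddBelow ν hu) h

lemma KR.cdf_quantile [NullSingletonClass ν] {u : ℝ} (hu : u ∈ Set.Ioo (0:ℝ) 1) :
    cdf ν (KR.quantile ν u) = u := by
  refine le_antisymm ?_ (KR.le_cdf_quantile ν hu)
  rw [KR.quantile, if_pos hu]
  set b := sInf {t | u ≤ cdf ν t} with hb
  have hl : Tendsto (cdf ν) (𝓝[<] b) (𝓝 (leftLim (cdf ν) b)) :=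
    (monotone_cdf ν).tendsto_leftLim b
  have : leftLim (cdf ν) b ≤ u := by
    refine le_of_tendsto hl ?_
    filter_upwards [self_mem_nhdsWithin] with t ht'
    have : t ∉ {t | u ≤ cdf ν t} := fun h => absurd ht' (not_lt.mpr (csInf_le (KR.q_bddBelow ν hu) h))
    exact (not_le.mp this).le
  rwa [KR.leftLim_cdf ν b] at this

lemma KR.injOn_quantile [NullSingletonClass ν] : Set.InjOn (KR.quantile ν) (Set.Ioo (0:ℝ) 1) := by
  intro u hu v hv h
  rw [← KR.cdf_quantile ν hu, ← KR.cdf_quantile ν hv, h]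

lemma KR.measurable_quantile : Measurable (KR.quantile ν) := by
  refine measurable_of_Iic (fun x => ?_)
  have : KR.quantile ν ⁻¹' Iic x =
      (Set.Ioo (0:ℝ) 1 ∩ Set.Iic (cdf ν x)) ∪ ((Set.Ioo (0:ℝ) 1)ᶜ ∩ {u : ℝ | (0:ℝ) ≤ x}) := by
    ext u
    by_cases hu : u ∈ Set.Ioo (0:ℝ) 1
    · simp only [Set.mem_preimage, Set.mem_Iic, Set.mem_union, Set.mem_inter_iff, hu,
        Set.mem_compl_iff, not_true, false_and, or_false, true_and, Set.mem_setOf_eq]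
      exact KR.quantile_le_iff ν hu
    · simp only [Set.mem_preimage, Set.mem_Iic, Set.mem_union, Set.mem_inter_iff, hu,
        Set.mem_compl_iff, not_false_iff, true_and, false_and, false_or, Set.mem_setOf_eq,
        KR.quantile, if_neg hu]
      simp
  rw [this]
  refine (measurableSet_Ioo.inter measurableSet_Iic).union
    (measurableSet_Ioo.compl.inter (MeasurableSet.const _))
end


theorem exists_invertible_noise_representation
    (d : ℕ) (μ : Measure (Fin d → ℝ)) [IsProbabilityMeasure μ]
    (hac : μ ≪ (volume : Measure (Fin d → ℝ)))
    (hpos : ∀ᵐ x ∂(volume : Measure (Fin d → ℝ)), 0 < μ.rnDeriv volume x) :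
    ∃ f : (Fin d → ℝ) → (Fin d → ℝ),
      Measurable f ∧
      Measure.map f
          ((volume : Measure (Fin d → ℝ)).restrict
            (Set.univ.pi fun _ => Set.Icc (0 : ℝ) 1)) = μ ∧
      ∃ Ω₀ : Set (Fin d → ℝ),
        MeasurableSet Ω₀ ∧
        Ω₀ ⊆ Set.univ.pi (fun _ => Set.Icc (0 : ℝ) 1) ∧
        ((volume : Measure (Fin d → ℝ)).restrict
            (Set.univ.pi fun _ => Set.Icc (0 : ℝ) 1)) Ω₀ = 1 ∧
        Set.InjOn f Ω₀ := by
  classical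
  set cube : Set (Fin d → ℝ) := Set.univ.pi fun _ => Set.Icc (0 : ℝ) 1 with hcube
  have hcubem : MeasurableSet cube := MeasurableSet.univ_pi fun _ => measurableSet_Icc
  set P : Measure (Fin d → ℝ) := volume.restrict cube with hPdef
  have hvolcube : volume cube = 1 := by
    rw [hcube, volume_pi_pi]
    simp [Real.volume_Icc]
  have hPuniv : P Set.univ = 1 := by
    rw [hPdef, Measure.restrict_apply MeasurableSet.univ, Set.univ_inter, hvolcube]
  haveI hPprob : IsProbabilityMeasure P := ⟨hPuniv⟩
  rcases Nat.eq_zero_or_pos d with hd | hd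
  · -- degenerate case d = 0
    subst hd
    haveI : Subsingleton (Fin 0 → ℝ) := ⟨fun a b => funext fun i => i.elim0⟩
    have hPμ : P = μ := by
      ext s hs
      rcases s.eq_empty_or_nonempty with rfl | ⟨x, hx⟩
      · simp
      · have hsu : s = Set.univ := by
          ext y
          simp only [Set.mem_univ, iff_true]
          rwa [Subsingleton.elim y x]
        rw [hsu, hPuniv, measure_univ]
    refine ⟨id, measurable_id, by rw [Measure.map_id]; exact hPμ, cube, hcubem,
      subset_rfl, ?_, Set.injOn_id cube⟩
    rw [hPdef, Measure.restrict_apply hcubem, Set.inter_self, hvolcube]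
  · -- main case
    haveI : Nonempty (Fin d) := ⟨⟨0, hd⟩⟩
    haveI : NullSingletonClass (volume : Measure (Fin d → ℝ)) := by infer_instance
    have hnc : ¬ Countable (Fin d → ℝ) := by
      intro h
      have hinj : Function.Injective (fun (r : ℝ) => (fun _ : Fin d => r)) := by
        intro a b hab
        exact congrFun hab ⟨0, hd⟩
      haveI : Countable ℝ := hinj.countable
      exact (not_countable : ¬ Countable ℝ) inferInstance
    let e : (Fin d → ℝ) ≃ᵐ ℝ :=
      PolishSpace.measurableEquivOfNotCountable hnc (not_countable : ¬ Countable ℝ)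
    set ρ : Measure ℝ := Measure.map e P with hρ
    set ν : Measure ℝ := Measure.map e μ with hν
    haveI : IsProbabilityMeasure ρ := Measure.isProbabilityMeasure_map e.measurable.aemeasurable
    haveI : IsProbabilityMeasure ν := Measure.isProbabilityMeasure_map e.measurable.aemeasurable
    have hsingle : ∀ x : Fin d → ℝ, μ {x} = 0 := fun x => hac (measure_singleton x)
    have hpre : ∀ y : ℝ, (⇑e) ⁻¹' {y} = {e.symm y} := by
      intro y
      ext z
      simp only [Set.mem_preimage, Set.mem_singleton_iff]
      exact ⟨fun h => by simp [← h], fun h => by simp [h]⟩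
    haveI : NullSingletonClass ρ := by
      refine ⟨fun y => ?_⟩
      rw [hρ, Measure.map_apply e.measurable (measurableSet_singleton y), hpre y]
      exact measure_singleton _
    haveI : NullSingletonClass ν := by
      refine ⟨fun y => ?_⟩
      rw [hν, Measure.map_apply e.measurable (measurableSet_singleton y), hpre y]
      exact hsingle _
    set F : ℝ → ℝ := fun y => cdf ρ y with hFdef
    have hFmeas : Measurable F := (monotone_cdf ρ).measurable
    set q : ℝ → ℝ := KR.quantile ν with hqdef
    have hqmeas : Measurable q := KR.measurable_quantile ν
    set T : ℝ → ℝ := fun y => q (F y) with hT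
    have hTmeas : Measurable T := hqmeas.comp hFmeas
    -- the key pushforward identity
    have hmapT : Measure.map T ρ = ν := by
      refine Measure.ext_of_Iic _ _ (fun x => ?_)
      rw [Measure.map_apply hTmeas measurableSet_Iic]
      set A : Set ℝ := {y | cdf ρ y ∈ Set.Ioo (0:ℝ) 1} with hA
      have hAm : MeasurableSet A := (monotone_cdf ρ).measurable measurableSet_Ioo
      have hAc : ρ Aᶜ = 0 := by
        refine measure_mono_null (fun y hy => ?_)
          (measure_union_null (KR.measure_cdf_eq ρ 0) (KR.measure_cdf_eq ρ 1))
        simp only [hA, Set.mem_compl_iff, Set.mem_setOf_eq, Set.mem_Ioo, not_and_or, not_lt] at hy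
        rcases hy with hy | hy
        · exact Or.inl (le_antisymm hy (cdf_nonneg ρ y))
        · exact Or.inr (le_antisymm (cdf_le_one ρ y) hy)
      have hsp : ∀ s : Set ℝ, ρ s = ρ (s ∩ A) := by
        intro s
        have h1 := measure_inter_add_diff (μ := ρ) s hAm
        have h2 : ρ (s \ A) = 0 := measure_mono_null (fun y hy => hy.2) hAc
        rw [h2, add_zero] at h1
        exact h1.symm
      have hiff : T ⁻¹' Set.Iic x ∩ A = {y | cdf ρ y ≤ cdf ν x} ∩ A := by
        ext y
        simp only [Set.mem_inter_iff, Set.mem_preimage, Set.mem_Iic, Set.mem_setOf_eq, hA]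
        constructor
        · rintro ⟨h1, h2⟩
          exact ⟨(KR.quantile_le_iff ν h2).mp h1, h2⟩
        · rintro ⟨h1, h2⟩
          exact ⟨(KR.quantile_le_iff ν h2).mpr h1, h2⟩
      rw [hsp (T ⁻¹' Set.Iic x), hiff, ← hsp {y | cdf ρ y ≤ cdf ν x},
        KR.measure_cdf_le ρ (cdf_nonneg ν x) (cdf_le_one ν x), ofReal_cdf ν x, hν]
    refine ⟨fun z => e.symm (T (e z)),
      e.symm.measurable.comp (hTmeas.comp e.measurable), ?_, ?_⟩
    · -- pushforward
      have h1 : Measure.map (fun z => e.symm (T (e z))) P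
          = Measure.map (⇑e.symm) (Measure.map T (Measure.map (⇑e) P)) := by
        rw [Measure.map_map e.symm.measurable hTmeas,
          Measure.map_map (e.symm.measurable.comp hTmeas) e.measurable]
        rfl
      rw [h1, ← hρ, hmapT, hν, Measure.map_map e.symm.measurable e.measurable]
      have : (⇑e.symm ∘ ⇑e) = id := funext fun z => e.symm_apply_apply z
      rw [this, Measure.map_id]
    · -- injectivity set
      set C : ℚ → Set ℝ := fun r => {y | cdf ρ y = cdf ρ (r:ℝ)} with hC
      have hCm : ∀ r, MeasurableSet (C r) :=
        fun r => (monotone_cdf ρ).measurable (measurableSet_singleton _)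
      set G : Set ℝ := {y | cdf ρ y ∈ Set.Ioo (0:ℝ) 1} ∩ (⋃ r : ℚ, C r)ᶜ with hG
      have hGm : MeasurableSet G :=
        ((monotone_cdf ρ).measurable measurableSet_Ioo).inter
          (MeasurableSet.iUnion hCm).compl
      have hGc : ρ Gᶜ = 0 := by
        rw [hG, Set.compl_inter, compl_compl]
        refine measure_union_null ?_ (measure_iUnion_null fun r => KR.measure_cdf_eq ρ _)
        refine measure_mono_null (fun y hy => ?_)
          (measure_union_null (KR.measure_cdf_eq ρ 0) (KR.measure_cdf_eq ρ 1))
        simp only [Set.mem_compl_iff, Set.mem_setOf_eq, Set.mem_Ioo, not_and_or, not_lt] at hy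
        rcases hy with hy | hy
        · exact Or.inl (le_antisymm hy (cdf_nonneg ρ y))
        · exact Or.inr (le_antisymm (cdf_le_one ρ y) hy)
      have hFinjG : Set.InjOn F G := by
        intro y hy y' hy' hFy
        by_contra hne
        rcases lt_or_gt_of_ne hne with hlt | hlt
        · obtain ⟨r, hr1, hr2⟩ := exists_rat_btwn hlt
          have h1 : cdf ρ y ≤ cdf ρ (r:ℝ) := (monotone_cdf ρ) hr1.le
          have h2 : cdf ρ (r:ℝ) ≤ cdf ρ y' := (monotone_cdf ρ) hr2.le
          have hFy' : cdf ρ y = cdf ρ y' := hFy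
          have : cdf ρ y = cdf ρ (r:ℝ) := le_antisymm h1 (by rw [hFy']; exact h2)
          exact hy.2 (Set.mem_iUnion.mpr ⟨r, this⟩)
        · obtain ⟨r, hr1, hr2⟩ := exists_rat_btwn hlt
          have h1 : cdf ρ y' ≤ cdf ρ (r:ℝ) := (monotone_cdf ρ) hr1.le
          have h2 : cdf ρ (r:ℝ) ≤ cdf ρ y := (monotone_cdf ρ) hr2.le
          have hFy' : cdf ρ y = cdf ρ y' := hFy
          have : cdf ρ y' = cdf ρ (r:ℝ) := le_antisymm h1 (by rw [← hFy']; exact h2)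
          exact hy'.2 (Set.mem_iUnion.mpr ⟨r, this⟩)
      have hTinjG : Set.InjOn T G := by
        intro y hy y' hy' hTeq
        have h1 : cdf ν (q (F y)) = F y := KR.cdf_quantile ν hy.1
        have h2 : cdf ν (q (F y')) = F y' := KR.cdf_quantile ν hy'.1
        have hq : q (F y) = q (F y') := hTeq
        have : F y = F y' := by rw [← h1, ← h2, hq]
        exact hFinjG hy hy' this
      refine ⟨cube ∩ (⇑e) ⁻¹' G, hcubem.inter (e.measurable hGm), Set.inter_subset_left, ?_, ?_⟩
      · have hρG : ρ G = 1 := by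
          have := measure_add_measure_compl (μ := ρ) hGm
          rw [hGc, add_zero] at this
          rw [this, measure_univ]
        have : P (cube ∩ (⇑e) ⁻¹' G) = P ((⇑e) ⁻¹' G) := by
          rw [hPdef, Measure.restrict_apply (hcubem.inter (e.measurable hGm)),
            Measure.restrict_apply (e.measurable hGm)]
          congr 1
          rw [Set.inter_assoc, Set.inter_comm, Set.inter_assoc, Set.inter_self, Set.inter_comm]
        rw [this, ← Measure.map_apply e.measurable hGm, ← hρ, hρG]
      · intro z hz z' hz' hf
        have h1 : T (e z) = T (e z') := e.symm.injective hf
        have h2 : e z = e z' := hTinjG hz.2 hz'.2 h1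
        exact e.injective h2
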